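/- For every prime p there exists a first-order formula Φ_p(x) in the language of rings, with one free variable and no parameters, such that for every periodic abelian group A and every f ∈ End A, the formula Φ_p(f) holds in End A if and only if f ∘ e_p = f (equivalently, f vanishes on every q-component with q ≠ p). In particular, the subring {f ∈ End A : f ∘ e_p = f}, which is canonically isomorphic to End A_p, is definable without parameters in End A, uniformly in A. -/

import Mathlib

/-- The `p`-component of an abelian group: the subgroup of elements of `p`-power order. -/
def pComponent (A : Type*) [AddCommGroup A] (p : ℕ) : AddSubgroup A where
  carrier := {a | ∃ n : ℕ, p ^ n • a = 0}
  zero_mem' := ⟨0, smul_zero _⟩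
  add_mem' := by
    rintro a b ⟨n, hn⟩ ⟨m, hm⟩
    refine ⟨n + m, ?_⟩
    have ha : p ^ (n + m) • a = 0 := by
      rw [pow_add, mul_comm, mul_smul, hn, smul_zero]
    have hb : p ^ (n + m) • b = 0 := by
      rw [pow_add, mul_smul, hm, smul_zero]
    rw [smul_add, ha, hb, add_zero]
  neg_mem' := by
    rintro a ⟨n, hn⟩
    exact ⟨n, by rw [smul_neg, hn, neg_zero]⟩


open FirstOrder

attribute [local instance] FirstOrder.Ring.compatibleRingOfRing

namespace Stmt5

open FirstOrder Language

/-! ### The coprime part of a torsion abelian group -/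

/-- The subgroup of elements of order coprime to `p`. -/
def cComponent (A : Type*) [AddCommGroup A] (p : ℕ) : AddSubgroup A where
  carrier := {a | ∃ n : ℕ, Nat.Coprime n p ∧ n • a = 0}
  zero_mem' := ⟨1, Nat.coprime_one_left p, smul_zero 1⟩
  add_mem' := by
    rintro a b ⟨n, hn, hna⟩ ⟨m, hm, hmb⟩
    refine ⟨n * m, Nat.Coprime.mul hn hm, ?_⟩
    have ha : (n * m) • a = 0 := by rw [mul_comm, mul_smul, hna, smul_zero]
    have hb : (n * m) • b = 0 := by rw [mul_smul, hmb, smul_zero]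
    rw [smul_add, ha, hb, add_zero]
  neg_mem' := by
    rintro a ⟨n, hn, hna⟩
    exact ⟨n, hn, by rw [smul_neg, hna, neg_zero]⟩

variable {A : Type*} [AddCommGroup A] {p : ℕ}

/-- Bezout coefficients over ℤ for coprime naturals. -/
theorem bezout {n m : ℕ} (h : Nat.Coprime n m) :
    ∃ u v : ℤ, u * n + v * m = 1 := h.isCoprime

theorem eq_zero_of_mem_p_mem_c {a : A} (hap : a ∈ pComponent A p)
    (hac : a ∈ cComponent A p) : a = 0 := by
  obtain ⟨k, hk⟩ := hap
  obtain ⟨n, hn, hna⟩ := hac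
  obtain ⟨u, v, huv⟩ := bezout (hn.pow_right k)
  have hna' : (n : ℤ) • a = 0 := by rw [natCast_zsmul, hna]
  have hk' : ((p ^ k : ℕ) : ℤ) • a = 0 := by rw [natCast_zsmul, hk]
  calc a = (1 : ℤ) • a := (one_smul ℤ a).symm
    _ = (u * n + v * (p ^ k : ℕ)) • a := by rw [huv]
    _ = u • ((n : ℤ) • a) + v • (((p ^ k : ℕ) : ℤ) • a) := by
        rw [add_zsmul, mul_zsmul, mul_zsmul]
    _ = 0 := by rw [hna', hk', smul_zero, smul_zero, add_zero]

theorem decomp (hp : p.Prime) (hT : AddMonoid.IsTorsion A) (a : A) :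
    ∃ x ∈ pComponent A p, ∃ y ∈ cComponent A p, a = x + y := by
  have hfin := hT a
  set n := addOrderOf a with hn
  have hn0 : n ≠ 0 := (hfin.addOrderOf_pos).ne'
  have hna : n • a = 0 := addOrderOf_nsmul_eq_zero a
  set k := n.factorization p with hkdef
  set m := n / p ^ k with hmdef
  have hPm : p ^ k * m = n := Nat.ordProj_mul_ordCompl_eq_self n p
  have hcop : Nat.Coprime p m := Nat.coprime_ordCompl hp hn0
  obtain ⟨u, v, huv⟩ := bezout (hcop.pow_left k)
  have hna' : ∀ w : ℤ, (w * n) • a = 0 := fun w => by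
    rw [mul_zsmul, natCast_zsmul, hna, smul_zero]
  refine ⟨(v * (m : ℤ)) • a, ⟨k, ?_⟩, (u * ((p ^ k : ℕ) : ℤ)) • a, ⟨m, hcop.symm, ?_⟩, ?_⟩
  · rw [← natCast_zsmul, smul_smul]
    have : ((p ^ k : ℕ) : ℤ) * (v * m) = v * n := by
      rw [← hPm]; push_cast; ring
    rw [this, hna']
  · rw [← natCast_zsmul, smul_smul]
    have : (m : ℤ) * (u * ((p ^ k : ℕ) : ℤ)) = u * n := by
      rw [← hPm]; push_cast; ring
    rw [this, hna']
  · calc a = (1 : ℤ) • a := (one_smul ℤ a).symm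
      _ = (u * ((p ^ k : ℕ) : ℤ) + v * m) • a := by rw [← huv]
      _ = _ := by rw [add_zsmul, add_comm]

theorem mem_p_map {q : ℕ} (g : AddMonoid.End A) {a : A} (ha : a ∈ pComponent A q) :
    g a ∈ pComponent A q := by
  obtain ⟨k, hk⟩ := ha
  exact ⟨k, by rw [← map_nsmul, hk, map_zero]⟩

theorem mem_c_map (g : AddMonoid.End A) {a : A} (ha : a ∈ cComponent A p) :
    g a ∈ cComponent A p := by
  obtain ⟨n, hn, hna⟩ := ha
  exact ⟨n, hn, by rw [← map_nsmul, hna, map_zero]⟩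

theorem end_nsmul_apply (n : ℕ) (g : AddMonoid.End A) (a : A) :
    (n • g) a = n • g a := by
  induction n with
  | zero => simp
  | succ n ih => rw [succ_nsmul, succ_nsmul]; change (n • g) a + g a = _; rw [ih]

theorem end_mul_apply (f g : AddMonoid.End A) (a : A) : (f * g) a = f (g a) := rfl

theorem eq_zero_of_smul_fixed {x : A} (hx : x ∈ pComponent A p)
    (h : AddMonoid.End A) (heq : x = p • h x) : x = 0 := by
  obtain ⟨k, hk⟩ := hx
  have key : ∀ j : ℕ, x = p ^ j • ((h ^ j : AddMonoid.End A) x) := by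
    intro j
    induction j with
    | zero => simp
    | succ j ih =>
      have h2 : (h ^ j : AddMonoid.End A) x = p • ((h ^ (j + 1) : AddMonoid.End A) x) := by
        conv_lhs => rw [heq]
        rw [map_nsmul, pow_succ, end_mul_apply]
      conv_lhs => rw [ih]
      rw [h2, smul_smul, ← pow_succ]
  have h3 : x = (h ^ k : AddMonoid.End A) (p ^ k • x) := by
    rw [map_nsmul]; exact key k
  rw [hk, map_zero] at h3
  exact h3

theorem f_vanish_of_coprime (hp : p.Prime) (f : AddMonoid.End A)
    (hf : ∀ q : ℕ, q.Prime → q ≠ p → ∀ a ∈ pComponent A q, f a = 0) :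
    ∀ n : ℕ, ∀ b : A, Nat.Coprime n p → n • b = 0 → f b = 0 := by
  intro n
  induction n using Nat.strong_induction_on with
  | _ n ih =>
    intro b hcop hb
    rcases eq_or_ne n 0 with rfl | hn0
    · rw [Nat.coprime_zero_left] at hcop
      exact absurd hcop hp.ne_one
    rcases eq_or_ne n 1 with rfl | hn1
    · have : b = 0 := by rw [← one_nsmul b, hb]
      rw [this, map_zero]
    set q := n.minFac with hq
    have hqp : q.Prime := Nat.minFac_prime hn1
    have hqd : q ∣ n := Nat.minFac_dvd n
    have hqne : q ≠ p := by
      rintro rfl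
      have : q ∣ 1 := hcop ▸ Nat.dvd_gcd hqd dvd_rfl
      exact hqp.ne_one (Nat.dvd_one.mp this)
    set k := n.factorization q with hkdef
    set m := n / q ^ k with hmdef
    have hPm : q ^ k * m = n := Nat.ordProj_mul_ordCompl_eq_self n q
    have hcopqm : Nat.Coprime q m := Nat.coprime_ordCompl hqp hn0
    have hkpos : 0 < k := hqp.factorization_pos_of_dvd hn0 hqd
    have hmlt : m < n := by
      apply Nat.div_lt_self (Nat.pos_of_ne_zero hn0)
      calc 1 < q := hqp.one_lt
        _ ≤ q ^ k := Nat.le_self_pow hkpos.ne' q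
    obtain ⟨u, v, huv⟩ := bezout (hcopqm.pow_left k)
    have hbn : ∀ w : ℤ, (w * n) • b = 0 := fun w => by
      rw [mul_zsmul, natCast_zsmul, hb, smul_zero]
    have hdec : b = (u * ((q ^ k : ℕ) : ℤ)) • b + (v * (m : ℤ)) • b := by
      calc b = (1 : ℤ) • b := (one_smul ℤ b).symm
        _ = (u * ((q ^ k : ℕ) : ℤ) + v * m) • b := by rw [← huv]
        _ = _ := add_zsmul _ _ _
    have h1 : f ((v * (m : ℤ)) • b) = 0 := by
      apply hf q hqp hqne
      refine ⟨k, ?_⟩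
      rw [← natCast_zsmul, smul_smul]
      have : ((q ^ k : ℕ) : ℤ) * (v * m) = v * n := by rw [← hPm]; push_cast; ring
      rw [this, hbn]
    have h2 : f ((u * ((q ^ k : ℕ) : ℤ)) • b) = 0 := by
      apply ih m hmlt
      · exact Nat.Coprime.coprime_dvd_left (Nat.ordCompl_dvd n q) hcop
      · rw [← natCast_zsmul, smul_smul]
        have : (m : ℤ) * (u * ((q ^ k : ℕ) : ℤ)) = u * n := by rw [← hPm]; push_cast; ring
        rw [this, hbn]
    rw [hdec, map_add, h1, h2, add_zero]

/-- Existence of the projection onto the coprime part, together with a "division by `p`"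
endomorphism witnessing `e' = p • (h * e')`. -/
theorem exists_proj (hp : p.Prime) (hT : AddMonoid.IsTorsion A) :
    ∃ e' h : AddMonoid.End A,
      (∀ a ∈ cComponent A p, e' a = a) ∧ e' = p • (h * e') := by
  classical
  set P := (pComponent A p).toIntSubmodule with hP
  set Q := (cComponent A p).toIntSubmodule with hQ
  have hdis : Disjoint Q P := by
    rw [Submodule.disjoint_def]
    intro a haQ haP
    exact eq_zero_of_mem_p_mem_c haP haQ
  have hcompl : IsCompl Q P := by
    refine ⟨hdis, codisjoint_iff.mpr (eq_top_iff.mpr fun a _ => ?_)⟩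
    obtain ⟨x, hx, y, hy, rfl⟩ := decomp hp hT a
    exact add_mem (Submodule.mem_sup_right (hx))
      (Submodule.mem_sup_left (hy))
  let π : A →ₗ[ℤ] Q := Q.linearProjOfIsCompl P hcompl
  let e' : AddMonoid.End A := (Q.subtype.comp π).toAddMonoidHom
  have he'c : ∀ a ∈ cComponent A p, e' a = a := by
    intro a ha
    have ha' : a ∈ Q := ha
    have h1 : π a = ⟨a, ha'⟩ := Submodule.linearProjOfIsCompl_apply_left hcompl ⟨a, ha'⟩
    show ((π a : Q) : A) = a
    rw [h1]
  have he'mem : ∀ a : A, e' a ∈ cComponent A p := fun a => (π a).2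
  -- multiplication by p on Q is bijective
  let ψ : Q →ₗ[ℤ] Q := (p : ℤ) • LinearMap.id
  have hψ : ∀ z : Q, ψ z = (p : ℤ) • z := fun z => rfl
  have hinj : Function.Injective ψ := by
    intro z w hzw
    have h0 : ψ (z - w) = 0 := by rw [map_sub, hzw, sub_self]
    have : (p : ℤ) • ((z - w : Q) : A) = 0 := by
      have := congrArg (Subtype.val) h0
      rw [hψ] at this
      simpa using this
    have hzmem : ((z - w : Q) : A) ∈ pComponent A p :=
      ⟨1, by rw [pow_one, ← natCast_zsmul]; exact this⟩
    have : ((z - w : Q) : A) = 0 := eq_zero_of_mem_p_mem_c hzmem (z - w).2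
    have : z - w = 0 := Subtype.ext this
    exact sub_eq_zero.mp this
  have hsurj : Function.Surjective ψ := by
    intro y
    obtain ⟨n, hn, hny⟩ := y.2
    obtain ⟨u, v, huv⟩ := bezout (Nat.Coprime.symm hn)
    refine ⟨u • y, Subtype.ext ?_⟩
    have hny' : (n : ℤ) • (y : A) = 0 := by rw [natCast_zsmul]; exact hny
    calc ((ψ (u • y) : Q) : A) = (p : ℤ) • (u • (y : A)) := by rw [hψ]; simp
      _ = ((p : ℤ) * u) • (y : A) := (mul_zsmul _ _ _).symm
      _ = (u * (p : ℤ)) • (y : A) := by rw [mul_comm]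
      _ = (u * (p : ℤ) + v * n) • (y : A) - v • ((n : ℤ) • (y : A)) := by
          rw [add_zsmul, mul_zsmul, mul_zsmul]; abel
      _ = (y : A) := by rw [huv, hny', smul_zero, sub_zero, one_zsmul]
  let eqv : Q ≃ₗ[ℤ] Q := LinearEquiv.ofBijective ψ ⟨hinj, hsurj⟩
  let h : AddMonoid.End A := (Q.subtype.comp ((eqv.symm : Q →ₗ[ℤ] Q).comp π)).toAddMonoidHom
  have hph : ∀ a : A, p • h a = e' a := by
    intro a
    have h1 : (p : ℤ) • (eqv.symm (π a)) = ψ (eqv.symm (π a)) := (hψ _).symm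
    have h2 : ψ (eqv.symm (π a)) = eqv (eqv.symm (π a)) := rfl
    have h3 : eqv (eqv.symm (π a)) = π a := eqv.apply_symm_apply _
    calc p • h a = p • ((eqv.symm (π a) : Q) : A) := rfl
      _ = (((p : ℤ) • eqv.symm (π a) : Q) : A) := by
          rw [← natCast_zsmul]; push_cast; rfl
      _ = ((π a : Q) : A) := by rw [h1, h2, h3]
      _ = e' a := rfl
  refine ⟨e', h, he'c, ?_⟩
  refine DFunLike.ext _ _ fun a => ?_
  rw [end_nsmul_apply, end_mul_apply, hph, he'c (e' a) (he'mem a)]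

/-- The key ring-theoretic characterization. -/
theorem key_iff (hp : p.Prime) (hT : AddMonoid.IsTorsion A) (f : AddMonoid.End A) :
    (∀ g : AddMonoid.End A, (∃ h : AddMonoid.End A, g = p • (h * g)) → f * g = 0) ↔
      (∀ q : ℕ, q.Prime → q ≠ p → ∀ a ∈ pComponent A q, f a = 0) := by
  constructor
  · intro H q hq hqp a ha
    obtain ⟨e', h, he'c, he'eq⟩ := exists_proj hp hT
    have hfe : f * e' = 0 := H e' ⟨h, he'eq⟩
    obtain ⟨k, hk⟩ := ha
    have hac : a ∈ cComponent A p := by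
      refine ⟨q ^ k, Nat.Coprime.pow_left k ((Nat.coprime_primes hq hp).mpr hqp), hk⟩
    calc f a = f (e' a) := by rw [he'c a hac]
      _ = (f * e') a := rfl
      _ = 0 := by rw [hfe]; rfl
  · intro hf g ⟨h, hg⟩
    refine DFunLike.ext _ _ fun a => ?_
    set b := g a with hb
    have hbeq : b = p • h b := by
      conv_lhs => rw [hb, hg]
      rw [end_nsmul_apply, end_mul_apply]
    obtain ⟨x, hx, y, hy, hxy⟩ := decomp hp hT b
    have hux : x = p • h x := by
      have h1 : x + y = p • h x + p • h y := by
        rw [← smul_add, ← map_add, ← hxy, ← hbeq]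
      have h2 : x - p • h x = p • h y - y := by
        rw [sub_eq_sub_iff_add_eq_add, h1, add_comm]
      have hmemP : x - p • h x ∈ pComponent A p := by
        apply AddSubgroup.sub_mem
        · exact hx
        · exact AddSubgroup.nsmul_mem _ (mem_p_map h hx) p
      have hmemC : x - p • h x ∈ cComponent A p := by
        rw [h2]
        apply AddSubgroup.sub_mem
        · exact AddSubgroup.nsmul_mem _ (mem_c_map h hy) p
        · exact hy
      have h0 := eq_zero_of_mem_p_mem_c hmemP hmemC
      exact (sub_eq_zero.mp h0)
    have hx0 : x = 0 := eq_zero_of_smul_fixed hx h hux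
    have hbc : b ∈ cComponent A p := by
      rw [hxy, hx0, zero_add]; exact hy
    obtain ⟨n, hn, hnb⟩ := hbc
    have : f b = 0 := f_vanish_of_coprime hp f hf n b hn hnb
    calc (f * g) a = f b := rfl
      _ = 0 := this
      _ = (0 : AddMonoid.End A) a := rfl

/-! ### The first-order formula -/

/-- `n`-fold sum of a ring term. -/
def nsmulTerm {α : Type*} (n : ℕ) (t : Language.ring.Term α) : Language.ring.Term α :=
  Nat.rec 0 (fun _ s => s + t) n

@[simp]
theorem realize_nsmulTerm {α : Type*} {R : Type*} [Ring R] [FirstOrder.Ring.CompatibleRing R]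
    (n : ℕ) (t : Language.ring.Term α) (v : α → R) :
    (nsmulTerm n t).realize v = n • t.realize v := by
  induction n with
  | zero => simp [nsmulTerm]
  | succ n ih =>
    have : nsmulTerm (n + 1) t = nsmulTerm n t + t := rfl
    rw [this, FirstOrder.Ring.realize_add, ih, succ_nsmul]

/-- The defining formula `∀ g, (∃ h, g = p • (h * g)) → f * g = 0`. -/
def Phi (p : ℕ) : Language.ring.Formula (Fin 1) :=
  BoundedFormula.all
    ((BoundedFormula.ex
        (Term.bdEqual (Term.var (Sum.inr 0))
          (nsmulTerm p (Term.var (Sum.inr 1) * Term.var (Sum.inr 0))))).imp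
      (Term.bdEqual (Term.var (Sum.inl 0) * Term.var (Sum.inr 0)) 0))

theorem realize_Phi {R : Type*} [Ring R] [FirstOrder.Ring.CompatibleRing R] (p : ℕ) (f : R) :
    (Phi p).Realize (fun _ => f) ↔
      ∀ g : R, (∃ h : R, g = p • (h * g)) → f * g = 0 := by
  simp [Phi, Formula.Realize, Fin.snoc]

end Stmt5

/-- For every prime `p` there is a parameter-free first-order ring
formula `Φ_p(x)` in one free variable such that for every periodic abelian group `A` and
every `f ∈ End A`, `Φ_p(f)` holds in `End A` if and only if `f ∘ e_p = f`, i.e. `f`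
vanishes on every `q`-component with `q ≠ p`.  In particular the subring of `End A`
canonically isomorphic to `End A_p` is definable without parameters, uniformly in `A`. -/
theorem exists_formula_defining_pComponent_endomorphisms
    (p : ℕ) (hp : p.Prime) :
    ∃ φ : Language.ring.Formula (Fin 1),
      ∀ (A : Type) [AddCommGroup A], AddMonoid.IsTorsion A →
        ∀ f : AddMonoid.End A,
          (φ.Realize (fun _ => f) ↔
            ∀ q : ℕ, q.Prime → q ≠ p → ∀ a ∈ pComponent A q, f a = 0) := by
  refine ⟨Stmt5.Phi p, fun A _ hT f => ?_⟩
  rw [Stmt5.realize_Phi]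
  exact Stmt5.key_iff hp hT f
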